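/- Let w, u ∈ F₂ be independent modulo F₂', i.e. exp_x(w)·exp_y(u) − exp_y(w)·exp_x(u) ≠ 0. Then the equation w² u² = z² has no solution in M₂ = F₂/F₂'': there is no z ∈ F₂ with w² u² z⁻² ∈ F₂''. (Baumslag–Mahler, the analogue of the Vaught conjecture for the free metabelian group of rank 2, exponent 2 case.) -/

import Mathlib

set_option maxHeartbeats 1000000
noncomputable section
abbrev R2 : Type := AddMonoidAlgebra ℤ (ℤ × ℤ)
def TT (g : ℤ × ℤ) : R2 := AddMonoidAlgebra.single g 1
lemma TT_add (g h : ℤ × ℤ) : TT (g + h) = TT g * TT h := by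
  simp [TT, AddMonoidAlgebra.single_mul_single]
lemma TT_zero : TT 0 = 1 := rfl
lemma TT_mul_cancel (g : ℤ × ℤ) : TT (-g) * TT g = 1 := by
  rw [← TT_add, neg_add_cancel, TT_zero]
structure Mag where
  p1 : R2
  p2 : R2
  g : ℤ × ℤ
lemma Mag.ext' {m n : Mag} (h1 : m.p1 = n.p1) (h2 : m.p2 = n.p2) (h3 : m.g = n.g) :
    m = n := by cases m; cases n; simp_all
instance : Mul Mag := ⟨fun m n => ⟨m.p1 + TT m.g * n.p1, m.p2 + TT m.g * n.p2, m.g + n.g⟩⟩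
instance : One Mag := ⟨⟨0, 0, 0⟩⟩
instance : Inv Mag := ⟨fun m => ⟨-(TT (-m.g) * m.p1), -(TT (-m.g) * m.p2), -m.g⟩⟩
@[simp] lemma Mag.mul_p1 (m n : Mag) : (m * n).p1 = m.p1 + TT m.g * n.p1 := rfl
@[simp] lemma Mag.mul_p2 (m n : Mag) : (m * n).p2 = m.p2 + TT m.g * n.p2 := rfl
@[simp] lemma Mag.mul_g (m n : Mag) : (m * n).g = m.g + n.g := rfl
@[simp] lemma Mag.one_p1 : (1 : Mag).p1 = 0 := rfl
@[simp] lemma Mag.one_p2 : (1 : Mag).p2 = 0 := rfl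
@[simp] lemma Mag.one_g : (1 : Mag).g = 0 := rfl
@[simp] lemma Mag.inv_p1 (m : Mag) : m⁻¹.p1 = -(TT (-m.g) * m.p1) := rfl
@[simp] lemma Mag.inv_p2 (m : Mag) : m⁻¹.p2 = -(TT (-m.g) * m.p2) := rfl
@[simp] lemma Mag.inv_g (m : Mag) : m⁻¹.g = -m.g := rfl
instance : Group Mag where
  mul_assoc a b c := by apply Mag.ext' <;> simp [TT_add] <;> ring
  one_mul a := by apply Mag.ext' <;> simp [TT_zero]
  mul_one a := by apply Mag.ext' <;> simp
  inv_mul_cancel a := by apply Mag.ext' <;> simp [TT_mul_cancel, ← mul_assoc]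

-- metabelian
lemma Mag.comm_of_g_zero {m n : Mag} (hm : m.g = 0) (hn : n.g = 0) : m * n = n * m := by
  apply Mag.ext' <;> simp [hm, hn, TT_zero] <;> ring


def gHom : Mag →* Multiplicative (ℤ × ℤ) where
  toFun m := Multiplicative.ofAdd m.g
  map_one' := rfl
  map_mul' m n := by simp [Mag.mul_g]

@[simp] lemma gHom_apply (m : Mag) : gHom m = Multiplicative.ofAdd m.g := rfl

lemma Mag.ds2 : derivedSeries Mag 2 = ⊥ := by
  have h1 : derivedSeries Mag 1 ≤ gHom.ker := by
    rw [derivedSeries_succ, Subgroup.commutator_le]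
    intro g1 _ g2 _
    rw [MonoidHom.mem_ker, commutatorElement_def]
    show Multiplicative.ofAdd (g1 * g2 * g1⁻¹ * g2⁻¹ : Mag).g = 1
    simp
  have h2 : derivedSeries Mag 2 ≤ ⊥ := by
    rw [derivedSeries_succ, Subgroup.commutator_le]
    intro g1 hg1 g2 hg2
    rw [Subgroup.mem_bot, commutatorElement_eq_one_iff_mul_comm]
    have e1 : g1.g = 0 := by simpa using h1 hg1
    have e2 : g2.g = 0 := by simpa using h1 hg2
    exact Mag.comm_of_g_zero e1 e2
  exact le_antisymm h2 bot_le

/-- The total exponent of `x` in a word of the free group on `{x, y}`. -/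
def expx (w : FreeGroup (Fin 2)) : ℤ :=
  Multiplicative.toAdd
    (FreeGroup.lift (fun i => Multiplicative.ofAdd (if i = 0 then (1 : ℤ) else 0)) w)

/-- The total exponent of `y` in a word of the free group on `{x, y}`. -/
def expy (w : FreeGroup (Fin 2)) : ℤ :=
  Multiplicative.toAdd
    (FreeGroup.lift (fun i => Multiplicative.ofAdd (if i = 1 then (1 : ℤ) else 0)) w)

def mgen : Fin 2 → Mag := fun i => if i = 0 then ⟨1, 0, (1,0)⟩ else ⟨0, 1, (0,1)⟩

def phi : FreeGroup (Fin 2) →* Mag := FreeGroup.lift mgen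

def exphom : FreeGroup (Fin 2) →* Multiplicative (ℤ × ℤ) :=
  FreeGroup.lift (fun i => Multiplicative.ofAdd (if i = 0 then ((1:ℤ), (0:ℤ)) else ((0:ℤ), (1:ℤ))))

lemma exphom_fst (v : FreeGroup (Fin 2)) : (Multiplicative.toAdd (exphom v)).1 = expx v := by
  have : (AddMonoidHom.toMultiplicative (AddMonoidHom.fst ℤ ℤ)).comp exphom
      = FreeGroup.lift (fun i => Multiplicative.ofAdd (if i = 0 then (1 : ℤ) else 0)) := by
    apply FreeGroup.ext_hom
    intro a
    fin_cases a <;> simp [exphom] <;> rfl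
  have h2 := congrArg (fun f => Multiplicative.toAdd (f v)) this
  simpa [expx] using h2

lemma exphom_snd (v : FreeGroup (Fin 2)) : (Multiplicative.toAdd (exphom v)).2 = expy v := by
  have : (AddMonoidHom.toMultiplicative (AddMonoidHom.snd ℤ ℤ)).comp exphom
      = FreeGroup.lift (fun i => Multiplicative.ofAdd (if i = 1 then (1 : ℤ) else 0)) := by
    apply FreeGroup.ext_hom
    intro a
    fin_cases a <;> simp [exphom] <;> rfl
  have h2 := congrArg (fun f => Multiplicative.toAdd (f v)) this
  simpa [expy] using h2

lemma phi_g (v : FreeGroup (Fin 2)) : (phi v).g = (expx v, expy v) := by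
  have : gHom.comp phi = exphom := by
    apply FreeGroup.ext_hom
    intro a
    fin_cases a <;> simp [phi, exphom, mgen] <;> rfl
  have h2 := congrArg (fun f => Multiplicative.toAdd (f v)) this
  have h3 : (phi v).g = Multiplicative.toAdd (exphom v) := by simpa using h2
  rw [h3]
  exact Prod.ext (exphom_fst v) (exphom_snd v)

def XX : R2 := TT (1,0)
def YY : R2 := TT (0,1)

def Fox (m : Mag) : Prop := m.p1 * (XX - 1) + m.p2 * (YY - 1) = TT m.g - 1

lemma fox_one : Fox 1 := by simp [Fox, TT_zero]

lemma fox_mul {m n : Mag} (hm : Fox m) (hn : Fox n) : Fox (m * n) := by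
  unfold Fox at *
  simp only [Mag.mul_p1, Mag.mul_p2, Mag.mul_g, TT_add]
  linear_combination hm + TT m.g * hn

lemma fox_inv {m : Mag} (hm : Fox m) : Fox m⁻¹ := by
  unfold Fox at *
  have hc := TT_mul_cancel m.g
  simp only [Mag.inv_p1, Mag.inv_p2, Mag.inv_g]
  linear_combination (-(TT (-m.g))) * hm - hc

lemma fox_phi (v : FreeGroup (Fin 2)) : Fox (phi v) := by
  induction v using FreeGroup.induction_on with
  | C1 => simpa using fox_one
  | of x =>
      show Fox (phi (FreeGroup.of x))
      simp only [phi, FreeGroup.lift_apply_of]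
      fin_cases x <;> simp [Fox, mgen, XX, YY, TT_zero]
  | inv_of x ih =>
      show Fox (phi (FreeGroup.of x)⁻¹)
      rw [map_inv]
      exact fox_inv ih
  | mul a b iha ihb => rw [map_mul]; exact fox_mul iha ihb

lemma dvd_T_sub_one (g : ℤ × ℤ) (n : ℤ) : (TT g - 1) ∣ (TT (n • g) - 1) := by
  induction n using Int.induction_on with
  | zero => simp [TT_zero]
  | succ k ih =>
      obtain ⟨c, hc⟩ := ih
      refine ⟨TT g * c + 1, ?_⟩
      have h1 : TT ((k + 1 : ℤ) • g) = TT g * TT ((k : ℤ) • g) := by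
        rw [← TT_add]; congr 1; rw [add_smul, one_smul]; abel
      rw [h1]
      linear_combination TT g * hc
  | pred k ih =>
      obtain ⟨c, hc⟩ := ih
      refine ⟨TT (-g) * c - TT (-g), ?_⟩
      have h1 : TT ((-k - 1 : ℤ) • g) = TT (-g) * TT ((-k : ℤ) • g) := by
        rw [← TT_add]; congr 1; rw [sub_smul, one_smul]; abel
      have h2 : TT (-g) * TT g = 1 := TT_mul_cancel g
      rw [h1]
      linear_combination TT (-g) * hc + h2

def evY : R2 →+* AddMonoidAlgebra ℤ ℤ := AddMonoidAlgebra.mapDomainRingHom ℤ (AddMonoidHom.fst ℤ ℤ)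
def inclX : AddMonoidAlgebra ℤ ℤ →+* R2 := AddMonoidAlgebra.mapDomainRingHom ℤ (AddMonoidHom.inl ℤ ℤ)

lemma evY_single (g : ℤ × ℤ) (b : ℤ) :
    evY (AddMonoidAlgebra.single g b) = AddMonoidAlgebra.single g.1 b := by
  show AddMonoidAlgebra.mapDomain (⇑(AddMonoidHom.fst ℤ ℤ)) (AddMonoidAlgebra.single g b) = _
  rw [AddMonoidAlgebra.mapDomain_single]
  rfl

lemma inclX_single (i : ℤ) (b : ℤ) :
    inclX (AddMonoidAlgebra.single i b) = AddMonoidAlgebra.single (i, (0:ℤ)) b := by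
  show AddMonoidAlgebra.mapDomain (⇑(AddMonoidHom.inl ℤ ℤ)) (AddMonoidAlgebra.single i b) = _
  rw [AddMonoidAlgebra.mapDomain_single]
  rfl

lemma Ydvd_sub_evY (f : R2) : (YY - 1) ∣ (f - inclX (evY f)) := by
  induction f using AddMonoidAlgebra.induction_on with
  | of g =>
      show (YY - 1) ∣ (AddMonoidAlgebra.single g 1 - inclX (evY (AddMonoidAlgebra.single g 1)))
      rw [evY_single, inclX_single]
      have h1 : AddMonoidAlgebra.single g (1:ℤ) - AddMonoidAlgebra.single (g.1, (0:ℤ)) 1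
          = AddMonoidAlgebra.single (g.1, (0:ℤ)) (1:ℤ) * (TT ((0 : ℤ), g.2) - 1) := by
        rw [mul_sub, mul_one, TT, AddMonoidAlgebra.single_mul_single]
        simp
      rw [h1]
      have h2 : (YY - 1) ∣ (TT ((0 : ℤ), g.2) - 1) := by
        have := dvd_T_sub_one ((0 : ℤ), (1 : ℤ)) g.2
        simpa [YY] using this
      exact Dvd.dvd.mul_left h2 _
  | add a b ha hb =>
      have : a + b - inclX (evY (a + b)) = (a - inclX (evY a)) + (b - inclX (evY b)) := by
        rw [map_add, map_add]; ring
      rw [this]; exact dvd_add ha hb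
  | smul r f hf =>
      have : r • f - inclX (evY (r • f)) = (r : R2) * (f - inclX (evY f)) := by
        rw [zsmul_eq_mul, map_mul, map_mul, map_intCast, map_intCast]; ring
      rw [this]
      exact Dvd.dvd.mul_left hf _

lemma evY_YY_sub_one : evY (YY - 1) = 0 := by
  have h1 : evY YY = 1 := by
    rw [YY, TT, evY_single]
    rfl
  rw [map_sub, h1, map_one, sub_self]

lemma evY_XX_sub_one_ne : evY (XX - 1) ≠ 0 := by
  intro h
  rw [map_sub, map_one, XX, TT, evY_single] at h
  have h' : (Finsupp.single (1:ℤ) (1:ℤ) : ℤ →₀ ℤ) - Finsupp.single 0 1 = 0 := by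
    rw [AddMonoidAlgebra.one_def] at h; exact congrArg AddMonoidAlgebra.coeff h
  have h3 : (Finsupp.single (1:ℤ) (1:ℤ)) 1 - (Finsupp.single (0:ℤ) (1:ℤ)) 1 = 0 := by
    rw [← Finsupp.sub_apply, h']; rfl
  rw [Finsupp.single_eq_same, Finsupp.single_eq_of_ne' (by norm_num)] at h3
  norm_num at h3

lemma syz {c1 c2 : R2} (h : c1 * (XX - 1) + c2 * (YY - 1) = 0) :
    ∃ lam : R2, c1 = lam * (YY - 1) := by
  have h1 : evY c1 * evY (XX - 1) = 0 := by
    have := congrArg evY h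
    rw [map_add, map_mul, map_mul, evY_YY_sub_one, mul_zero, add_zero, map_zero] at this
    exact this
  have h2 : evY c1 = 0 := by
    rcases mul_eq_zero.mp h1 with h' | h'
    · exact h'
    · exact absurd h' evY_XX_sub_one_ne
  have h3 := Ydvd_sub_evY c1
  rw [h2, map_zero, sub_zero] at h3
  obtain ⟨lam, hl⟩ := h3
  exact ⟨lam, by rw [hl]; ring⟩

lemma TT_sub_one_ne {g : ℤ × ℤ} (hg : g ≠ 0) : (TT g - 1 : R2) ≠ 0 := by
  intro h
  have h' : (Finsupp.single g (1:ℤ) : (ℤ × ℤ) →₀ ℤ) - Finsupp.single 0 1 = 0 := by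
    rw [TT, AddMonoidAlgebra.one_def] at h; exact congrArg AddMonoidAlgebra.coeff h
  have h3 : (Finsupp.single g (1:ℤ)) g - (Finsupp.single (0 : ℤ × ℤ) (1:ℤ)) g = 0 := by
    rw [← Finsupp.sub_apply, h']; rfl
  rw [Finsupp.single_eq_same, Finsupp.single_eq_of_ne' (Ne.symm hg)] at h3
  norm_num at h3

lemma YY_sub_one_ne : (YY - 1 : R2) ≠ 0 := TT_sub_one_ne (by simp)
lemma XX_sub_one_ne : (XX - 1 : R2) ≠ 0 := TT_sub_one_ne (by simp)

def geomX (n : ℕ) : R2 := ∑ i ∈ Finset.range n, TT ((i:ℤ), 0)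
def geomY (n : ℕ) : R2 := ∑ j ∈ Finset.range n, TT (0, (j:ℤ))

lemma geomX_mul (n : ℕ) : geomX n * (XX - 1) = TT ((n:ℤ), 0) - 1 := by
  induction n with
  | zero => simp [geomX, Prod.mk_zero_zero, TT_zero]
  | succ n ih =>
      have hstep : TT ((n:ℤ), 0) * XX = TT (((n:ℕ) + 1 : ℤ), 0) := by
        rw [XX, ← TT_add]; congr 1 <;> simp
      rw [geomX, Finset.sum_range_succ, ← geomX]
      push_cast at ih hstep ⊢
      linear_combination ih + hstep

lemma geomY_mul (n : ℕ) : geomY n * (YY - 1) = TT (0, (n:ℤ)) - 1 := by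
  induction n with
  | zero => simp [geomY, Prod.mk_zero_zero, TT_zero]
  | succ n ih =>
      have hstep : TT (0, (n:ℤ)) * YY = TT (0, ((n:ℕ) + 1 : ℤ)) := by
        rw [YY, ← TT_add]; congr 1 <;> simp
      rw [geomY, Finset.sum_range_succ, ← geomY]
      push_cast at ih hstep ⊢
      linear_combination ih + hstep

def Lsub (a c d : ℤ) : AddSubgroup (ℤ × ℤ) := AddSubgroup.closure {((a:ℤ), (0:ℤ)), ((c:ℤ), (d:ℤ))}
abbrev GQ (a c d : ℤ) := (ℤ × ℤ) ⧸ Lsub a c d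
abbrev SS (a c d : ℤ) := AddMonoidAlgebra (ZMod 2) (GQ a c d)

def mkQ (a c d : ℤ) : (ℤ × ℤ) →+ GQ a c d := QuotientAddGroup.mk' (Lsub a c d)

def Fhom (a c d : ℤ) : Multiplicative (ℤ × ℤ) →* SS a c d where
  toFun g := AddMonoidAlgebra.single (mkQ a c d g.toAdd) 1
  map_one' := by
    show AddMonoidAlgebra.single (mkQ a c d 0) 1 = 1
    rw [map_zero, AddMonoidAlgebra.one_def]
  map_mul' g h := by
    show AddMonoidAlgebra.single (mkQ a c d (g.toAdd + h.toAdd)) 1 = _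
    rw [AddMonoidAlgebra.single_mul_single, map_add]
    norm_num

def Psi (a c d : ℤ) : R2 →+* SS a c d :=
  ((AddMonoidAlgebra.lift ℤ (SS a c d) (ℤ × ℤ)) (Fhom a c d)).toRingHom

lemma Psi_TT (a c d : ℤ) (g : ℤ × ℤ) :
    Psi a c d (TT g) = AddMonoidAlgebra.single (mkQ a c d g) 1 := by
  show ((AddMonoidAlgebra.lift ℤ (SS a c d) (ℤ × ℤ)) (Fhom a c d)) (AddMonoidAlgebra.single g 1)
      = _
  rw [AddMonoidAlgebra.lift_single, one_smul]
  rfl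

lemma single_zero_mem (a c d : ℤ) {g : ℤ × ℤ} (hg : g ∈ Lsub a c d) :
    Psi a c d (TT g) = 1 := by
  rw [Psi_TT]
  have : mkQ a c d g = 0 := (QuotientAddGroup.eq_zero_iff g).mpr hg
  rw [this, AddMonoidAlgebra.one_def]

lemma mem_L_left (a c d : ℤ) : ((a:ℤ), (0:ℤ)) ∈ Lsub a c d :=
  AddSubgroup.subset_closure (by simp)

lemma mem_L_right (a c d : ℤ) : ((c:ℤ), (d:ℤ)) ∈ Lsub a c d :=
  AddSubgroup.subset_closure (by simp)

lemma two_eq_zero_SS (a c d : ℤ) : (1 : SS a c d) + 1 = 0 := by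
  rw [AddMonoidAlgebra.one_def, ← AddMonoidAlgebra.single_add]
  have : (1 : ZMod 2) + 1 = 0 := by decide
  rw [this, AddMonoidAlgebra.single_zero]

lemma Psi_kills (a c d : ℤ) (α β γ : R2) :
    Psi a c d (α * (1 + TT (a, 0) * TT (c, d)) + β * (TT (c, d) - 1) + γ * (TT (a, 0) - 1))
      = 0 := by
  have h1 : Psi a c d (TT (a, 0)) = 1 := single_zero_mem a c d (mem_L_left a c d)
  have h2 : Psi a c d (TT (c, d)) = 1 := single_zero_mem a c d (mem_L_right a c d)
  rw [map_add, map_add, map_mul, map_mul, map_mul, map_add, map_sub, map_sub, map_mul,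
    map_one, h1, h2]
  have h3 : (1 : SS a c d) + 1 * 1 = 0 := by rw [mul_one]; exact two_eq_zero_SS a c d
  rw [h3]
  ring

lemma box_distinct (a c d : ℤ) (ha : 1 ≤ a) (hd : 1 ≤ d) {i j : ℤ}
    (hi0 : 0 ≤ i) (hia : i < a) (hj0 : 0 ≤ j) (hjd : j < d)
    (hmem : (i, j) ∈ Lsub a c d) : i = 0 ∧ j = 0 := by
  rw [Lsub, AddSubgroup.mem_closure_pair] at hmem
  obtain ⟨m, n, hmn⟩ := hmem
  have h1 : m • ((a:ℤ), (0:ℤ)) + n • ((c:ℤ), (d:ℤ)) = (m*a + n*c, n*d) := by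
    simp [Prod.ext_iff, smul_eq_mul]
  rw [h1, Prod.mk.injEq] at hmn
  obtain ⟨hi, hj⟩ := hmn
  have hn : n = 0 := by
    rcases lt_trichotomy n 0 with h | h | h
    · exfalso; nlinarith
    · exact h
    · exfalso; nlinarith
  have hm : m = 0 := by
    rw [hn] at hi
    rcases lt_trichotomy m 0 with h | h | h
    · exfalso; nlinarith
    · exact h
    · exfalso; nlinarith
  rw [hn] at hj
  rw [hn, hm] at hi
  simp at hi hj
  exact ⟨hi.symm, hj.symm⟩

lemma mkQ_eq_iff (a c d : ℤ) (x y : ℤ × ℤ) :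
    mkQ a c d x = mkQ a c d y ↔ x - y ∈ Lsub a c d := by
  rw [mkQ, QuotientAddGroup.mk'_apply, QuotientAddGroup.mk'_apply]
  exact QuotientAddGroup.eq_iff_sub_mem

lemma Psi_P_ne (a c d : ℤ) (ha : 1 ≤ a) (hd : 1 ≤ d) :
    Psi a c d (TT ((a+c), 0) * geomY d.toNat * geomX a.toNat) ≠ 0 := by
  classical
  have hP : TT ((a+c), 0) * geomY d.toNat * geomX a.toNat
      = ∑ j ∈ Finset.range d.toNat, ∑ i ∈ Finset.range a.toNat,
          TT (a + c + (i:ℤ), (j:ℤ)) := by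
    rw [geomY, Finset.mul_sum, geomX, Finset.sum_mul]
    apply Finset.sum_congr rfl
    intro j _
    rw [Finset.mul_sum]
    apply Finset.sum_congr rfl
    intro i _
    rw [← TT_add, ← TT_add]
    congr 1 <;> simp
  intro h0
  rw [hP, map_sum] at h0
  simp only [map_sum, Psi_TT] at h0
  have h1 := congrArg (fun f => AddMonoidAlgebra.coeff f (mkQ a c d ((a+c), 0))) h0
  simp only [AddMonoidAlgebra.coeff_sum, Finsupp.finset_sum_apply, AddMonoidAlgebra.coeff_zero,
    Finsupp.coe_zero, Pi.zero_apply] at h1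
  have hterm : ∀ j ∈ Finset.range d.toNat, ∀ i ∈ Finset.range a.toNat,
      (AddMonoidAlgebra.single ((mkQ a c d) (a + c + (i:ℤ), (j:ℤ))) (1 : ZMod 2)).coeff
          ((mkQ a c d) ((a+c), 0))
        = if i = 0 ∧ j = 0 then 1 else 0 := by
    intro j hj i hi
    rw [AddMonoidAlgebra.coeff_single, Finsupp.single_apply]
    by_cases hc : (mkQ a c d) (a + c + (i:ℤ), (j:ℤ)) = (mkQ a c d) ((a+c), 0)
    · rw [if_pos hc]
      rw [mkQ_eq_iff] at hc
      have hsub : ((a + c + (i:ℤ), (j:ℤ)) : ℤ × ℤ) - ((a+c), 0) = ((i:ℤ), (j:ℤ)) := by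
        simp [Prod.ext_iff]
      rw [hsub] at hc
      have hia : (i:ℤ) < a := by have := Finset.mem_range.mp hi; omega
      have hjd : (j:ℤ) < d := by have := Finset.mem_range.mp hj; omega
      have hij := box_distinct a c d ha hd (Int.ofNat_nonneg i) hia
        (Int.ofNat_nonneg j) hjd hc
      rw [if_pos ⟨by exact_mod_cast hij.1, by exact_mod_cast hij.2⟩]
    · rw [if_neg hc, if_neg ?_]
      intro hcon
      apply hc
      obtain ⟨hi0, hj0⟩ := hcon
      rw [hi0, hj0]
      congr 1
      simp
  have h3 : (∑ j ∈ Finset.range d.toNat, ∑ i ∈ Finset.range a.toNat,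
      (AddMonoidAlgebra.single ((mkQ a c d) (a + c + (i:ℤ), (j:ℤ))) (1 : ZMod 2)).coeff
          ((mkQ a c d) ((a+c), 0)))
      = ∑ j ∈ Finset.range d.toNat, ∑ i ∈ Finset.range a.toNat,
          (if i = 0 ∧ j = 0 then (1 : ZMod 2) else 0) :=
    Finset.sum_congr rfl (fun j hj => Finset.sum_congr rfl (fun i hi => hterm j hj i hi))
  rw [h3] at h1
  have hA : 0 ∈ Finset.range a.toNat := Finset.mem_range.mpr (by omega)
  have hD : 0 ∈ Finset.range d.toNat := Finset.mem_range.mpr (by omega)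
  have h4 : (∑ j ∈ Finset.range d.toNat, ∑ i ∈ Finset.range a.toNat,
      (if i = 0 ∧ j = 0 then (1 : ZMod 2) else 0)) = 1 := by
    have h5 : ∀ j ∈ Finset.range d.toNat, (∑ i ∈ Finset.range a.toNat,
        (if i = 0 ∧ j = 0 then (1 : ZMod 2) else 0)) = if j = 0 then 1 else 0 := by
      intro j _
      simp only [ite_and]
      rw [Finset.sum_ite_eq' (Finset.range a.toNat) 0 (fun _ => if j = 0 then (1 : ZMod 2) else 0)]
      rw [if_pos hA]
    rw [Finset.sum_congr rfl h5]
    rw [Finset.sum_ite_eq' (Finset.range d.toNat) 0 (fun _ => (1 : ZMod 2))]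
    rw [if_pos hD]
  rw [h4] at h1
  exact one_ne_zero h1

lemma algebra_key (a c d : ℤ) (ha : 1 ≤ a) (hd : 1 ≤ d)
    (p1 p2 q1 q2 r1 r2 : R2)
    (hp : p1 * (XX - 1) + p2 * (YY - 1) = TT (a, 0) - 1)
    (hq : q1 * (XX - 1) + q2 * (YY - 1) = TT (c, d) - 1)
    (hr : r1 * (XX - 1) + r2 * (YY - 1) = TT (a + c, d) - 1)
    (he : p1 + TT (a,0) * p1 + TT (2*a, 0) * q1 + TT (2*a,0) * TT (c,d) * q1
        = r1 + TT (a+c, d) * r1) : False := by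
  have hWW : TT (2*a, (0:ℤ)) = TT (a,0) * TT (a,0) := by
    rw [← TT_add]; congr 1; simp [Prod.ext_iff]; ring
  have hWU : TT (a+c, d) = TT (a,0) * TT (c,d) := by
    rw [← TT_add]; congr 1 <;> simp
  have hac : TT (a+c, (0:ℤ)) = TT (a,0) * TT (c,0) := by
    rw [← TT_add]; congr 1 <;> simp
  have hcd : TT (c, d) = TT (c,0) * TT (0,d) := by
    rw [← TT_add]; congr 1 <;> simp
  obtain ⟨sa', hsa⟩ : ∃ s, TT ((a:ℤ), (0:ℤ)) - 1 = (XX - 1) * s := by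
    have := dvd_T_sub_one ((1:ℤ),(0:ℤ)) a
    rw [show a • ((1:ℤ),(0:ℤ)) = ((a:ℤ), (0:ℤ)) by simp] at this
    exact this
  obtain ⟨sc', hsc⟩ : ∃ s, TT ((c:ℤ), (0:ℤ)) - 1 = (XX - 1) * s := by
    have := dvd_T_sub_one ((1:ℤ),(0:ℤ)) c
    rw [show c • ((1:ℤ),(0:ℤ)) = ((c:ℤ), (0:ℤ)) by simp] at this
    exact this
  obtain ⟨td', htd⟩ : ∃ s, TT ((0:ℤ), (d:ℤ)) - 1 = (YY - 1) * s := by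
    have := dvd_T_sub_one ((0:ℤ),(1:ℤ)) d
    rw [show d • ((0:ℤ),(1:ℤ)) = ((0:ℤ), (d:ℤ)) by simp] at this
    exact this
  rw [hWU] at hr
  rw [hWW, hWU] at he
  have hs : (r1 - p1 - TT (a,0)*q1) * (XX - 1) + (r2 - p2 - TT (a,0)*q2) * (YY - 1) = 0 := by
    linear_combination hr - hp - TT (a,0) * hq
  obtain ⟨μ, hμ⟩ := syz hs
  have ht : ((1 - TT (c,d))*p1 + (TT (a,0) - 1)*q1) * (XX - 1)
      + ((1 - TT (c,d))*p2 + (TT (a,0) - 1)*q2) * (YY - 1) = 0 := by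
    linear_combination (1 - TT (c,d)) * hp + (TT (a,0) - 1) * hq
  obtain ⟨lam, hlam⟩ := syz ht
  have hWt : TT (a,0) * ((1 - TT (c,d))*p1 + (TT (a,0) - 1)*q1)
      = (1 + TT (a,0)*TT (c,d)) * (r1 - p1 - TT (a,0)*q1) := by
    linear_combination he
  have hWlam : TT (a,0) * lam = (1 + TT (a,0)*TT (c,d)) * μ := by
    apply mul_right_cancel₀ YY_sub_one_ne
    rw [hlam, hμ] at hWt
    linear_combination hWt
  have hps : (p1 - sa') * (XX - 1) + p2 * (YY - 1) = 0 := by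
    linear_combination hp + hsa
  obtain ⟨ν, hν⟩ := syz hps
  have hqs : (q1 - sc') * (XX - 1) + (q2 - TT (c,0) * td') * (YY - 1) = 0 := by
    linear_combination hq + hsc + TT (c,0) * htd + hcd
  obtain ⟨ν', hν'⟩ := syz hqs
  have hcross : (TT (c,0) - 1) * sa' = (TT (a,0) - 1) * sc' := by
    linear_combination sa' * hsc - sc' * hsa
  have hfinal : lam * (YY - 1)
      = (-(TT (c,0) * td' * sa') + (1 - TT (c,d))*ν + (TT (a,0) - 1)*ν') * (YY - 1) := by
    linear_combination (-1 : R2)*hlam + (1 - TT (c,d))*hν + (TT (a,0) - 1)*hν'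
      - hcross - (TT (c,0) * sa') * htd - sa' * hcd
  have hkey : lam = -(TT (c,0) * td' * sa') + (1 - TT (c,d))*ν + (TT (a,0) - 1)*ν' :=
    mul_right_cancel₀ YY_sub_one_ne hfinal
  have hWlam2 : TT (a,0) * (-(TT (c,0) * td' * sa') + (1 - TT (c,d))*ν + (TT (a,0) - 1)*ν')
      = (1 + TT (a,0)*TT (c,d)) * μ := by rw [← hkey]; exact hWlam
  have hfin : TT (a+c, 0) * td' * sa'
      = (-μ) * (1 + TT (a,0)*TT (c,d)) + (-(TT (a,0)*ν)) * (TT (c,d) - 1)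
        + (TT (a,0)*ν') * (TT (a,0) - 1) := by
    linear_combination (-1 : R2)*hWlam2 + (td'*sa')*hac
  have hgeomX : sa' = geomX a.toNat := by
    apply mul_right_cancel₀ XX_sub_one_ne
    rw [geomX_mul]
    rw [show ((a.toNat : ℤ)) = a from Int.toNat_of_nonneg (by omega)]
    linear_combination -hsa
  have hgeomY : td' = geomY d.toNat := by
    apply mul_right_cancel₀ YY_sub_one_ne
    rw [geomY_mul]
    rw [show ((d.toNat : ℤ)) = d from Int.toNat_of_nonneg (by omega)]
    linear_combination -htd
  apply Psi_P_ne a c d ha hd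
  rw [show TT ((a+c), 0) * geomY d.toNat * geomX a.toNat = TT (a+c,0) * td' * sa' from by
    rw [hgeomX, hgeomY]]
  rw [hfin]
  exact Psi_kills a c d (-μ) (-(TT (a,0)*ν)) (TT (a,0)*ν')

@[simp] lemma expx_one : expx 1 = 0 := by simp [expx]
@[simp] lemma expy_one : expy 1 = 0 := by simp [expy]
lemma expx_mul (v w : FreeGroup (Fin 2)) : expx (v * w) = expx v + expx w := by
  simp [expx]
lemma expy_mul (v w : FreeGroup (Fin 2)) : expy (v * w) = expy v + expy w := by
  simp [expy]
lemma expx_inv (v : FreeGroup (Fin 2)) : expx v⁻¹ = -expx v := by simp [expx]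
lemma expy_inv (v : FreeGroup (Fin 2)) : expy v⁻¹ = -expy v := by simp [expy]
lemma expx_of (i : Fin 2) : expx (FreeGroup.of i) = if i = 0 then 1 else 0 := by
  simp [expx]
lemma expy_of (i : Fin 2) : expy (FreeGroup.of i) = if i = 1 then 1 else 0 := by
  simp [expy]
lemma expx_pow (v : FreeGroup (Fin 2)) (n : ℕ) : expx (v ^ n) = n * expx v := by
  induction n with
  | zero => simp
  | succ n ih => rw [pow_succ, expx_mul, ih]; push_cast; ring
lemma expy_pow (v : FreeGroup (Fin 2)) (n : ℕ) : expy (v ^ n) = n * expy v := by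
  induction n with
  | zero => simp
  | succ n ih => rw [pow_succ, expy_mul, ih]; push_cast; ring

lemma expx_zpow (v : FreeGroup (Fin 2)) (n : ℤ) : expx (v ^ n) = n * expx v := by
  induction n using Int.induction_on with
  | zero => simp
  | succ k ih => rw [zpow_add, zpow_one, expx_mul, ih]; ring
  | pred k ih => rw [zpow_sub, zpow_one, expx_mul, expx_inv, ih]; ring
lemma expy_zpow (v : FreeGroup (Fin 2)) (n : ℤ) : expy (v ^ n) = n * expy v := by
  induction n using Int.induction_on with
  | zero => simp
  | succ k ih => rw [zpow_add, zpow_one, expy_mul, ih]; ring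
  | pred k ih => rw [zpow_sub, zpow_one, expy_mul, expy_inv, ih]; ring

lemma lift_eval (A B : ℤ) (v : FreeGroup (Fin 2)) :
    FreeGroup.lift (fun i : Fin 2 => Multiplicative.ofAdd (if i = 0 then A else B)) v
      = Multiplicative.ofAdd (A * expx v + B * expy v) := by
  induction v using FreeGroup.induction_on with
  | C1 => simp
  | of x =>
      show FreeGroup.lift _ (FreeGroup.of x)
          = Multiplicative.ofAdd (A * expx (FreeGroup.of x) + B * expy (FreeGroup.of x))
      rw [FreeGroup.lift_apply_of, expx_of, expy_of]
      fin_cases x <;> norm_num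
  | inv_of x ih =>
      show (FreeGroup.lift _) (FreeGroup.of x)⁻¹
          = Multiplicative.ofAdd (A * expx (FreeGroup.of x)⁻¹ + B * expy (FreeGroup.of x)⁻¹)
      rw [map_inv, FreeGroup.lift_apply_of, expx_inv, expy_inv, expx_of, expy_of]
      fin_cases x <;> norm_num <;> rfl
  | mul a b iha ihb =>
      rw [map_mul, iha, ihb, expx_mul, expy_mul, ← ofAdd_add]
      congr 1
      ring

lemma lift_eval' (A B : ℤ) (v : FreeGroup (Fin 2)) :
    FreeGroup.lift (fun i : Fin 2 => Multiplicative.ofAdd (if i = 1 then A else B)) v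
      = Multiplicative.ofAdd (B * expx v + A * expy v) := by
  have h : (fun i : Fin 2 => Multiplicative.ofAdd (if i = 1 then A else B))
      = (fun i : Fin 2 => Multiplicative.ofAdd (if i = 0 then B else A)) := by
    funext i; fin_cases i <;> norm_num
  rw [h, lift_eval]

lemma exp_endo_x (e : FreeGroup (Fin 2) →* FreeGroup (Fin 2)) (v : FreeGroup (Fin 2)) :
    expx (e v) = expx (e (FreeGroup.of 0)) * expx v + expx (e (FreeGroup.of 1)) * expy v := by
  have hcomp : (FreeGroup.lift (fun i : Fin 2 => Multiplicative.ofAdd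
        (if i = 0 then (1:ℤ) else 0))).comp e
      = FreeGroup.lift (fun i : Fin 2 => Multiplicative.ofAdd
          (if i = 0 then expx (e (FreeGroup.of 0)) else expx (e (FreeGroup.of 1)))) := by
    apply FreeGroup.ext_hom
    intro i
    fin_cases i <;> simp [expx] <;> rfl
  have h4 := DFunLike.congr_fun hcomp v
  rw [MonoidHom.comp_apply, lift_eval, lift_eval] at h4
  have h5 := congrArg Multiplicative.toAdd h4
  rw [toAdd_ofAdd, toAdd_ofAdd] at h5
  have h6 : expx (e v) = 1 * expx (e v) + 0 * expy (e v) := by ring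
  show expx (e v) = _
  rw [h6, h5]

lemma exp_endo_y (e : FreeGroup (Fin 2) →* FreeGroup (Fin 2)) (v : FreeGroup (Fin 2)) :
    expy (e v) = expy (e (FreeGroup.of 0)) * expx v + expy (e (FreeGroup.of 1)) * expy v := by
  have hcomp : (FreeGroup.lift (fun i : Fin 2 => Multiplicative.ofAdd
        (if i = 1 then (1:ℤ) else 0))).comp e
      = FreeGroup.lift (fun i : Fin 2 => Multiplicative.ofAdd
          (if i = 0 then expy (e (FreeGroup.of 0)) else expy (e (FreeGroup.of 1)))) := by
    apply FreeGroup.ext_hom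
    intro i
    fin_cases i <;> simp [expy] <;> rfl
  have h4 := DFunLike.congr_fun hcomp v
  rw [MonoidHom.comp_apply, lift_eval', lift_eval] at h4
  have h5 := congrArg Multiplicative.toAdd h4
  rw [toAdd_ofAdd, toAdd_ofAdd] at h5
  have h6 : expy (e v) = 0 * expx (e v) + 1 * expy (e v) := by ring
  show expy (e v) = _
  rw [h6, h5]

lemma key_words (w u z : FreeGroup (Fin 2))
    (hb : expy w = 0) (ha : 1 ≤ expx w) (hd : 1 ≤ expy u)
    (hmem : w ^ 2 * u ^ 2 * (z ^ 2)⁻¹ ∈ derivedSeries (FreeGroup (Fin 2)) 2) : False := by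
  set a := expx w with ha_def
  set c := expx u with hc_def
  set d := expy u with hd_def
  have h1 : phi (w ^ 2 * u ^ 2 * (z ^ 2)⁻¹) = 1 := by
    have h2 : phi (w ^ 2 * u ^ 2 * (z ^ 2)⁻¹) ∈ derivedSeries Mag 2 :=
      map_derivedSeries_le_derivedSeries phi 2 ⟨_, hmem, rfl⟩
    rw [Mag.ds2, Subgroup.mem_bot] at h2
    exact h2
  have heq : phi w ^ 2 * phi u ^ 2 = phi z ^ 2 := by
    have h3 : phi w ^ 2 * phi u ^ 2 * (phi z ^ 2)⁻¹ = 1 := by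
      rw [← map_pow, ← map_pow, ← map_pow, ← map_inv, ← map_mul, ← map_mul]
      exact h1
    exact mul_inv_eq_one.mp h3
  have hPg : (phi w).g = (a, 0) := by rw [phi_g, ← hb]
  have hQg : (phi u).g = (c, d) := phi_g u
  -- exponents of z
  have hgeq := congrArg Mag.g heq
  rw [pow_two, pow_two, pow_two] at hgeq
  simp only [Mag.mul_g, hPg, hQg] at hgeq
  have hZg : (phi z).g = (a + c, d) := by
    have hz := phi_g z
    rw [hz] at hgeq ⊢
    obtain ⟨h5, h6⟩ := Prod.mk.injEq _ _ _ _ ▸ hgeq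
    have h5' : a + a + (c + c) = expx z + expx z := by
      have := congrArg Prod.fst hgeq; simpa using this
    have h6' : (0:ℤ) + 0 + (d + d) = expy z + expy z := by
      have := congrArg Prod.snd hgeq; simpa using this
    have : expx z = a + c := by omega
    have h7 : expy z = d := by omega
    rw [this, h7]
  -- module component equation
  have hcomp := congrArg Mag.p1 heq
  rw [pow_two, pow_two, pow_two] at hcomp
  simp only [Mag.mul_p1, Mag.mul_g, hPg, hQg, hZg] at hcomp
  have h2a : ((a, (0:ℤ)) : ℤ × ℤ) + (a, 0) = (2*a, 0) := by
    simp [Prod.ext_iff]; ring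
  rw [h2a] at hcomp
  -- Fox identities
  have hfp := fox_phi w
  have hfq := fox_phi u
  have hfz := fox_phi z
  rw [Fox, hPg] at hfp
  rw [Fox, hQg] at hfq
  rw [Fox, hZg] at hfz
  exact algebra_key a c d ha hd (phi w).p1 (phi w).p2 (phi u).p1 (phi u).p2
    (phi z).p1 (phi z).p2 hfp hfq hfz
    (by linear_combination hcomp)

def eSwap : FreeGroup (Fin 2) →* FreeGroup (Fin 2) :=
  FreeGroup.lift (fun i => if i = 0 then FreeGroup.of 1 else FreeGroup.of 0)
def eShear (k : ℤ) : FreeGroup (Fin 2) →* FreeGroup (Fin 2) :=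
  FreeGroup.lift (fun i => if i = 0 then FreeGroup.of 0 * (FreeGroup.of 1) ^ k else FreeGroup.of 1)
def eInvX : FreeGroup (Fin 2) →* FreeGroup (Fin 2) :=
  FreeGroup.lift (fun i => if i = 0 then (FreeGroup.of 0)⁻¹ else FreeGroup.of 1)
def eInvY : FreeGroup (Fin 2) →* FreeGroup (Fin 2) :=
  FreeGroup.lift (fun i => if i = 0 then FreeGroup.of 0 else (FreeGroup.of 1)⁻¹)

lemma eSwap_x (v : FreeGroup (Fin 2)) : expx (eSwap v) = expy v := by
  rw [exp_endo_x]
  simp [eSwap, expx_of]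
lemma eSwap_y (v : FreeGroup (Fin 2)) : expy (eSwap v) = expx v := by
  rw [exp_endo_y]
  simp [eSwap, expy_of]
lemma eShear_x (k : ℤ) (v : FreeGroup (Fin 2)) : expx (eShear k v) = expx v := by
  rw [exp_endo_x]
  simp [eShear, expx_of, expx_mul, expx_zpow]
lemma eShear_y (k : ℤ) (v : FreeGroup (Fin 2)) : expy (eShear k v) = k * expx v + expy v := by
  rw [exp_endo_y]
  simp [eShear, expy_of, expy_mul, expy_zpow]
lemma eInvX_x (v : FreeGroup (Fin 2)) : expx (eInvX v) = -expx v := by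
  rw [exp_endo_x]
  simp [eInvX, expx_of, expx_inv]
lemma eInvX_y (v : FreeGroup (Fin 2)) : expy (eInvX v) = expy v := by
  rw [exp_endo_y]
  simp [eInvX, expy_of, expy_inv]
lemma eInvY_x (v : FreeGroup (Fin 2)) : expx (eInvY v) = expx v := by
  rw [exp_endo_x]
  simp [eInvY, expx_of, expx_inv]
lemma eInvY_y (v : FreeGroup (Fin 2)) : expy (eInvY v) = -expy v := by
  rw [exp_endo_y]
  simp [eInvY, expy_of, expy_inv]

lemma apply_endo (e : FreeGroup (Fin 2) →* FreeGroup (Fin 2)) {w u z : FreeGroup (Fin 2)}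
    (hmem : w ^ 2 * u ^ 2 * (z ^ 2)⁻¹ ∈ derivedSeries (FreeGroup (Fin 2)) 2) :
    (e w) ^ 2 * (e u) ^ 2 * ((e z) ^ 2)⁻¹ ∈ derivedSeries (FreeGroup (Fin 2)) 2 := by
  have h := map_derivedSeries_le_derivedSeries e 2 ⟨_, hmem, rfl⟩
  simpa [map_mul, map_pow, map_inv] using h

lemma main_aux : ∀ n : ℕ, ∀ w u z : FreeGroup (Fin 2),
    (expy w).natAbs = n →
    expx w * expy u - expy w * expx u ≠ 0 →
    w ^ 2 * u ^ 2 * (z ^ 2)⁻¹ ∈ derivedSeries (FreeGroup (Fin 2)) 2 → False := by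
  intro n
  induction n using Nat.strong_induction_on with
  | _ n IH =>
  intro w u z hn hdet hmem
  by_cases hb : expy w = 0
  · have ha0 : expx w ≠ 0 := by
      intro h; apply hdet; rw [hb, h]; ring
    have hd0 : expy u ≠ 0 := by
      intro h; apply hdet; rw [hb, h]; ring
    obtain ⟨w1, u1, z1, hb1, ha1, hd1, hmem1⟩ :
        ∃ w1 u1 z1, expy w1 = 0 ∧ expx w1 ≠ 0 ∧ 1 ≤ expy u1 ∧
          w1 ^ 2 * u1 ^ 2 * (z1 ^ 2)⁻¹ ∈ derivedSeries (FreeGroup (Fin 2)) 2 := by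
      rcases le_or_gt 1 (expy u) with h | h
      · exact ⟨w, u, z, hb, ha0, h, hmem⟩
      · refine ⟨eInvY w, eInvY u, eInvY z, ?_, ?_, ?_, apply_endo eInvY hmem⟩
        · rw [eInvY_y, hb]; ring
        · rw [eInvY_x]; exact ha0
        · rw [eInvY_y]; omega
    obtain ⟨w2, u2, z2, hb2, ha2, hd2, hmem2⟩ :
        ∃ w2 u2 z2, expy w2 = 0 ∧ 1 ≤ expx w2 ∧ 1 ≤ expy u2 ∧
          w2 ^ 2 * u2 ^ 2 * (z2 ^ 2)⁻¹ ∈ derivedSeries (FreeGroup (Fin 2)) 2 := by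
      rcases le_or_gt 1 (expx w1) with h | h
      · exact ⟨w1, u1, z1, hb1, h, hd1, hmem1⟩
      · refine ⟨eInvX w1, eInvX u1, eInvX z1, ?_, ?_, ?_, apply_endo eInvX hmem1⟩
        · rw [eInvX_y]; exact hb1
        · rw [eInvX_x]; omega
        · rw [eInvX_y]; exact hd1
    exact key_words w2 u2 z2 hb2 ha2 hd2 hmem2
  · -- Euclidean step
    set b := expy w with hbdef
    set a0 := expx w with ha0def
    set k := -(a0 / b) with hkdef
    set w1 := eShear k (eSwap w) with hw1
    set u1 := eShear k (eSwap u) with hu1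
    set z1 := eShear k (eSwap z) with hz1
    clear_value b a0 k w1 u1 z1
    have hw1y : expy w1 = a0 % b := by
      rw [hw1, eShear_y, eSwap_x, eSwap_y, hkdef, ← ha0def, ← hbdef]
      have := Int.mul_ediv_add_emod a0 b
      linarith
    have hlt : (expy w1).natAbs < n := by
      rw [hw1y, ← hn]
      have hb' : b ≠ 0 := hb
      have h1 : 0 ≤ a0 % b := Int.emod_nonneg a0 hb'
      have h2 : a0 % b < |b| := by have := Int.emod_lt a0 hb'; rwa [Int.abs_eq_natAbs]
      have h3 : |b| = (b.natAbs : ℤ) := Int.abs_eq_natAbs b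
      omega
    have hdet1 : expx w1 * expy u1 - expy w1 * expx u1 ≠ 0 := by
      rw [hw1, hu1, eShear_x, eShear_y, eShear_x, eShear_y, eSwap_x, eSwap_y,
        eSwap_x, eSwap_y, ← ha0def, ← hbdef]
      intro hcon
      apply hdet
      linear_combination -hcon
    have hmem1 : w1 ^ 2 * u1 ^ 2 * (z1 ^ 2)⁻¹ ∈ derivedSeries (FreeGroup (Fin 2)) 2 := by
      rw [hw1, hu1, hz1]
      exact apply_endo (eShear k) (apply_endo eSwap hmem)
    exact IH _ hlt w1 u1 z1 rfl hdet1 hmem1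

theorem stmt_9 (w u : FreeGroup (Fin 2))
    (h : expx w * expy u - expy w * expx u ≠ 0) :
    ¬ ∃ z : FreeGroup (Fin 2),
      w ^ 2 * u ^ 2 * (z ^ 2)⁻¹ ∈ derivedSeries (FreeGroup (Fin 2)) 2 := by
  rintro ⟨z, hz⟩
  exact main_aux (expy w).natAbs w u z rfl h hz

end
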